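/- arXiv:1108.4619 — 2 statements merged into one kernel-verified Lean document; each statement's English description precedes it below -/
import Mathlib

section
/- Let O be the ring of integers of an imaginary quadratic field F, let n be a nonzero ideal of O, and let p be a rational prime coprime to n. Then the reduction-mod-p map from Γ₁(n) = { M ∈ SL₂(O) : M ≡ (1 *; 0 1) mod n } to SL₂(O/pO) is surjective. -/
open NumberField

set_option maxHeartbeats 2000000
set_option synthInstance.maxHeartbeats 1000000

section Aux

variable {R : Type*} [CommRing R]

lemma crt2' {I J : Ideal R} (h : IsCoprime I J) (a b : R) :
    ∃ x, x - a ∈ I ∧ x - b ∈ J := by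
  obtain ⟨i, hi, j, hj, hij⟩ := Ideal.isCoprime_iff_exists.mp h
  refine ⟨a * j + b * i, ?_, ?_⟩
  · have h1 : a * j + b * i - a = (b - a) * i := by linear_combination a * hij
    rw [h1]; exact Ideal.mul_mem_left _ _ hi
  · have h2 : a * j + b * i - b = (a - b) * j := by linear_combination b * hij
    rw [h2]; exact Ideal.mul_mem_left _ _ hj

lemma avoid_maximals (M : Ideal R) (c : R) (T : Finset (Ideal R))
    (hT : ∀ q ∈ T, q.IsMaximal ∧ ¬ M ≤ q) :
    ∃ t ∈ M, ∀ q ∈ T, c + t ∉ q := by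
  classical
  induction T using Finset.induction_on with
  | empty => exact ⟨0, M.zero_mem, by simp⟩
  | @insert q T hqT ih =>
    obtain ⟨t, htM, ht⟩ := ih (fun q' hq' => hT q' (Finset.mem_insert_of_mem hq'))
    have hq : q.IsMaximal := (hT q (Finset.mem_insert_self q T)).1
    have hqM : ¬ M ≤ q := (hT q (Finset.mem_insert_self q T)).2
    by_cases hc : c + t ∈ q
    · have hcop : IsCoprime q (M * ∏ q' ∈ T, q') := by
        refine IsCoprime.mul_right ?_ (IsCoprime.prod_right fun q' hq' => ?_)
        · rw [Ideal.isCoprime_iff_sup_eq]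
          exact hq.1.2 _ (left_lt_sup.mpr hqM)
        · rw [Ideal.isCoprime_iff_sup_eq]
          exact hq.coprime_of_ne (hT q' (Finset.mem_insert_of_mem hq')).1
            (fun h => hqT (h ▸ hq'))
      obtain ⟨i, hi, j, hj, hij⟩ := Ideal.isCoprime_iff_exists.mp hcop
      have hjM : j ∈ M := Ideal.mul_le_left hj
      have hjT : ∀ q' ∈ T, j ∈ q' := fun q' hq' =>
        (le_trans Ideal.mul_le_right (le_trans Ideal.prod_le_inf (Finset.inf_le hq'))) hj
      have hjq : j ∉ q := fun h => hq.ne_top (Ideal.eq_top_of_unit_mem _ _ 1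
        (by simpa using (hij ▸ Ideal.add_mem q hi h : (1:R) ∈ q)) (by simp))
      refine ⟨t + j, Ideal.add_mem _ htM hjM, fun q' hq' => ?_⟩
      rcases Finset.mem_insert.mp hq' with rfl | hq'
      · intro h
        have hj' : j ∈ q' := by
          have hrw : j = (c + (t + j)) - (c + t) := by ring
          rw [hrw]; exact q'.sub_mem h hc
        exact hjq hj'
      · intro h
        have hct : c + t ∈ q' := by
          have hrw : c + t = (c + (t + j)) - j := by ring
          rw [hrw]; exact q'.sub_mem h (hjT q' hq')
        exact ht q' hq' hct
    · exact ⟨t, htM, fun q' hq' => by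
        rcases Finset.mem_insert.mp hq' with rfl | hq'
        · exact hc
        · exact ht q' hq'⟩

lemma finite_maximals_mem [IsDedekindDomain R] {d : R} (hd : d ≠ 0) :
    {q : Ideal R | q.IsMaximal ∧ d ∈ q}.Finite := by
  have hne : Ideal.span {d} ≠ 0 := by
    simpa [Ideal.span_singleton_eq_bot] using hd
  haveI := UniqueFactorizationMonoid.fintypeSubtypeDvd (Ideal.span {d}) hne
  rw [← Set.finite_coe_iff]
  refine Finite.of_injective (fun q =>
    (⟨q.1, Ideal.dvd_iff_le.mpr (by
      rw [Ideal.span_le, Set.singleton_subset_iff]; exact q.2.2)⟩ :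
      {x : Ideal R // x ∣ Ideal.span {d}})) ?_
  intro q q' h
  have h' : (q : Ideal R) = (q' : Ideal R) :=
    congrArg (fun z : {x : Ideal R // x ∣ Ideal.span {d}} => z.1) h
  exact Subtype.ext h'

end Aux

/-- Let `O` be the ring of integers of an imaginary quadratic field `F`,
`n` a nonzero ideal of `O`, and `p` a rational prime coprime to `n`.  Then the reduction map
from `Γ₁(n) = { M ∈ SL₂(O) : M ≡ (1 *; 0 1) mod n }` to `SL₂(O/pO)` is surjective. -/
theorem stmt_0 (F : Type*) [Field F] [NumberField F]
    (hdeg : Module.finrank ℚ F = 2)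
    (himag : ∀ v : NumberField.InfinitePlace F, v.IsComplex)
    (n : Ideal (𝓞 F)) (hn : n ≠ ⊥)
    (p : ℕ) (hp : p.Prime)
    (hcop : IsCoprime (Ideal.span {(p : 𝓞 F)}) n) :
    ∀ y : Matrix.SpecialLinearGroup (Fin 2) ((𝓞 F) ⧸ Ideal.span {(p : 𝓞 F)}),
      ∃ x : Matrix.SpecialLinearGroup (Fin 2) (𝓞 F),
        ((x : Matrix (Fin 2) (Fin 2) (𝓞 F)) 0 0 - 1 ∈ n) ∧
        ((x : Matrix (Fin 2) (Fin 2) (𝓞 F)) 1 1 - 1 ∈ n) ∧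
        ((x : Matrix (Fin 2) (Fin 2) (𝓞 F)) 1 0 ∈ n) ∧
        Matrix.SpecialLinearGroup.map (Ideal.Quotient.mk (Ideal.span {(p : 𝓞 F)})) x = y := by
  classical
  set J : Ideal (𝓞 F) := Ideal.span {(p : 𝓞 F)} with hJdef
  intro y
  obtain ⟨a, ha⟩ := Ideal.Quotient.mk_surjective (I := J)
    ((y : Matrix (Fin 2) (Fin 2) ((𝓞 F) ⧸ J)) 0 0)
  obtain ⟨b, hb⟩ := Ideal.Quotient.mk_surjective (I := J)
    ((y : Matrix (Fin 2) (Fin 2) ((𝓞 F) ⧸ J)) 0 1)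
  obtain ⟨c, hc⟩ := Ideal.Quotient.mk_surjective (I := J)
    ((y : Matrix (Fin 2) (Fin 2) ((𝓞 F) ⧸ J)) 1 0)
  obtain ⟨d, hd⟩ := Ideal.Quotient.mk_surjective (I := J)
    ((y : Matrix (Fin 2) (Fin 2) ((𝓞 F) ⧸ J)) 1 1)
  have hdet : a * d - b * c - 1 ∈ J := by
    have hy : ((y : Matrix (Fin 2) (Fin 2) ((𝓞 F) ⧸ J))).det = 1 := y.2
    rw [Matrix.det_fin_two] at hy
    have h0 : Ideal.Quotient.mk J (a * d - b * c - 1) = 0 := by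
      rw [map_sub, map_sub, map_mul, map_mul, map_one, ha, hb, hc, hd, hy, sub_self]
    exact (Ideal.Quotient.eq_zero_iff_mem).mp h0
  -- Step 1: adjust bottom row mod n
  obtain ⟨c', hc'J, hc'n⟩ := crt2' hcop c 0
  obtain ⟨d₁, hd₁J, hd₁n⟩ := crt2' hcop d 1
  rw [sub_zero] at hc'n
  set M : Ideal (𝓞 F) := J * n with hMdef
  have hJbot : J ≠ ⊥ := by
    simp only [hJdef, Ne, Ideal.span_singleton_eq_bot]
    exact_mod_cast hp.ne_zero
  have hMbot : M ≠ ⊥ := by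
    rw [hMdef, Ne, Ideal.mul_eq_bot]
    tauto
  obtain ⟨m, hmM, hd'ne⟩ : ∃ m ∈ M, d₁ + m ≠ 0 := by
    by_cases h0 : d₁ = 0
    · obtain ⟨m, hm, hm0⟩ := Submodule.exists_mem_ne_zero_of_ne_bot hMbot
      exact ⟨m, hm, by simp [h0, hm0]⟩
    · exact ⟨0, M.zero_mem, by simpa using h0⟩
  set d' := d₁ + m with hd'def
  have hMJ : M ≤ J := Ideal.mul_le_left
  have hMn : M ≤ n := Ideal.mul_le_right
  have hd'J : d' - d ∈ J := by
    have hrw : d' - d = (d₁ - d) + m := by rw [hd'def]; ring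
    rw [hrw]; exact J.add_mem hd₁J (hMJ hmM)
  have hd'n : d' - 1 ∈ n := by
    have hrw : d' - 1 = (d₁ - 1) + m := by rw [hd'def]; ring
    rw [hrw]; exact n.add_mem hd₁n (hMn hmM)
  -- coprimality of span {c', d'} with M
  set K : Ideal (𝓞 F) := Ideal.span {c', d'} with hKdef
  have hc'K : c' ∈ K := Ideal.subset_span (by simp)
  have hd'K : d' ∈ K := Ideal.subset_span (by simp)
  have hKJ : IsCoprime K J := by
    rw [Ideal.isCoprime_iff_sup_eq, Ideal.eq_top_iff_one]
    have h1 : a * d' - b * c' - 1 ∈ J := by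
      have he : a * d' - b * c' - 1
          = a * (d' - d) - b * (c' - c) + (a * d - b * c - 1) := by ring
      rw [he]
      exact J.add_mem (J.sub_mem (J.mul_mem_left _ hd'J) (J.mul_mem_left _ hc'J)) hdet
    have h2 : a * d' - b * c' ∈ K := K.sub_mem (K.mul_mem_left _ hd'K) (K.mul_mem_left _ hc'K)
    have hrw : (1 : 𝓞 F) = (a * d' - b * c') - (a * d' - b * c' - 1) := by ring
    rw [hrw]
    exact Submodule.sub_mem _ (Ideal.mem_sup_left h2) (Ideal.mem_sup_right h1)
  have hKn : IsCoprime K n := by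
    rw [Ideal.isCoprime_iff_sup_eq, Ideal.eq_top_iff_one]
    have hrw : (1 : 𝓞 F) = d' - (d' - 1) := by ring
    rw [hrw]
    exact Submodule.sub_mem _ (Ideal.mem_sup_left hd'K) (Ideal.mem_sup_right hd'n)
  have hKM : IsCoprime K M := hKJ.mul_right hKn
  -- Step 2: prime avoidance to make the bottom row coprime
  have hfin : {q : Ideal (𝓞 F) | q.IsMaximal ∧ d' ∈ q}.Finite := finite_maximals_mem hd'ne
  have hfin2 : {q : Ideal (𝓞 F) | q.IsMaximal ∧ d' ∈ q ∧ ¬ M ≤ q}.Finite :=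
    hfin.subset (fun q hq => ⟨hq.1, hq.2.1⟩)
  set T : Finset (Ideal (𝓞 F)) := hfin2.toFinset with hTdef
  have hTmem : ∀ q : Ideal (𝓞 F), q ∈ T ↔ (q.IsMaximal ∧ d' ∈ q ∧ ¬ M ≤ q) := by
    intro q; rw [hTdef, Set.Finite.mem_toFinset]; rfl
  obtain ⟨t, htM, ht⟩ := avoid_maximals M c' T
    (fun q hq => ⟨((hTmem q).mp hq).1, ((hTmem q).mp hq).2.2⟩)
  set c'' := c' + t with hc''def
  have hc''J : c'' - c ∈ J := by
    have hrw : c'' - c = (c' - c) + t := by rw [hc''def]; ring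
    rw [hrw]; exact J.add_mem hc'J (hMJ htM)
  have hc''n : c'' ∈ n := n.add_mem hc'n (hMn htM)
  have hspan : Ideal.span ({c'', d'} : Set (𝓞 F)) = ⊤ := by
    by_contra h
    obtain ⟨q, hq, hle⟩ := Ideal.exists_le_maximal _ h
    have hd'q : d' ∈ q := hle (Ideal.subset_span (by simp))
    have hc''q : c'' ∈ q := hle (Ideal.subset_span (by simp))
    by_cases hMq : M ≤ q
    · have hc'q : c' ∈ q := by
        have hrw : c' = c'' - t := by rw [hc''def]; ring
        rw [hrw]; exact q.sub_mem hc''q (hMq htM)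
      have hKq : K ≤ q := by
        rw [hKdef, Ideal.span_le]
        intro z hz
        rcases hz with rfl | hz
        · exact hc'q
        · simp only [Set.mem_singleton_iff] at hz; rw [hz]; exact hd'q
      have htop : (⊤ : Ideal (𝓞 F)) ≤ q := by
        rw [← hKM.sup_eq]; exact sup_le hKq hMq
      exact hq.ne_top (top_le_iff.mp htop)
    · exact ht q ((hTmem q).mpr ⟨hq, hd'q, hMq⟩) hc''q
  have hcoel : IsCoprime c'' d' := by
    have h1 : (1 : 𝓞 F) ∈ Ideal.span ({c'', d'} : Set (𝓞 F)) := hspan ▸ Submodule.mem_top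
    obtain ⟨u, v, huv⟩ := Ideal.mem_span_pair.mp h1
    exact ⟨u, v, huv⟩
  -- Step 3: complete to an SL2 matrix
  obtain ⟨g, hg0, hg1⟩ := hcoel.exists_SL2_row 1
  set x₀ := (g : Matrix (Fin 2) (Fin 2) (𝓞 F)) 0 0 with hx₀
  set y₀ := (g : Matrix (Fin 2) (Fin 2) (𝓞 F)) 0 1 with hy₀
  have hdetg : x₀ * d' - y₀ * c'' = 1 := by
    have hgdet : (g : Matrix (Fin 2) (Fin 2) (𝓞 F)).det = 1 := g.2
    rw [Matrix.det_fin_two] at hgdet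
    rw [hg0, hg1] at hgdet
    rw [hx₀, hy₀]
    linear_combination hgdet
  obtain ⟨u, v, huv⟩ := hcoel
  set s := (a - x₀) * u + (b - y₀) * v with hsdef
  have key : (a - x₀) * d' - (b - y₀) * c'' ∈ J := by
    have he : (a - x₀) * d' - (b - y₀) * c''
        = a * (d' - d) - b * (c'' - c) + (a * d - b * c - 1) + (1 - (x₀ * d' - y₀ * c'')) := by
      ring
    rw [he, hdetg, sub_self, add_zero]
    exact J.add_mem (J.sub_mem (J.mul_mem_left _ hd'J) (J.mul_mem_left _ hc''J)) hdet
  have h1 : s * c'' - (a - x₀) ∈ J := by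
    have he : s * c'' - (a - x₀) = (-v) * ((a - x₀) * d' - (b - y₀) * c'') := by
      rw [hsdef]; linear_combination (a - x₀) * huv
    rw [he]; exact J.mul_mem_left _ key
  have h2 : s * d' - (b - y₀) ∈ J := by
    have he : s * d' - (b - y₀) = u * ((a - x₀) * d' - (b - y₀) * c'') := by
      rw [hsdef]; linear_combination (b - y₀) * huv
    rw [he]; exact J.mul_mem_left _ key
  -- final matrix
  refine ⟨⟨!![x₀ + s * c'', y₀ + s * d'; c'', d'], by
    rw [Matrix.det_fin_two_of]; linear_combination hdetg⟩, ?_, ?_, ?_, ?_⟩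
  · show x₀ + s * c'' - 1 ∈ n
    have he : x₀ + s * c'' - 1
        = -x₀ * (d' - 1) + y₀ * c'' + s * c'' + (x₀ * d' - y₀ * c'' - 1) := by ring
    rw [he, hdetg, sub_self, add_zero]
    exact n.add_mem (n.add_mem (n.mul_mem_left _ hd'n) (n.mul_mem_left _ hc''n))
      (n.mul_mem_left _ hc''n)
  · show d' - 1 ∈ n
    exact hd'n
  · show c'' ∈ n
    exact hc''n
  · apply Matrix.SpecialLinearGroup.ext
    intro i j
    fin_cases i <;> fin_cases j
    · show Ideal.Quotient.mk J (x₀ + s * c'') = (y : Matrix (Fin 2) (Fin 2) ((𝓞 F) ⧸ J)) 0 0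
      rw [← ha, Ideal.Quotient.mk_eq_mk_iff_sub_mem]
      have hrw : x₀ + s * c'' - a = s * c'' - (a - x₀) := by ring
      rw [hrw]; exact h1
    · show Ideal.Quotient.mk J (y₀ + s * d') = (y : Matrix (Fin 2) (Fin 2) ((𝓞 F) ⧸ J)) 0 1
      rw [← hb, Ideal.Quotient.mk_eq_mk_iff_sub_mem]
      have hrw : y₀ + s * d' - b = s * d' - (b - y₀) := by ring
      rw [hrw]; exact h2
    · show Ideal.Quotient.mk J c'' = (y : Matrix (Fin 2) (Fin 2) ((𝓞 F) ⧸ J)) 1 0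
      rw [← hc, Ideal.Quotient.mk_eq_mk_iff_sub_mem]
      exact hc''J
    · show Ideal.Quotient.mk J d' = (y : Matrix (Fin 2) (Fin 2) ((𝓞 F) ⧸ J)) 1 1
      rw [← hd, Ideal.Quotient.mk_eq_mk_iff_sub_mem]
      exact hd'J
end

section
/- With k algebraically closed of characteristic p and G̃ = GL₂(F_{p²}): the class of X^{p(p-1)} Y^{p(p-1)} in U_{(p-1)²} / Ψ(V_{1,p-2}) is fixed by G̃ twisted by det^{-(p-1)τ}; equivalently, the map sending 1 to the class of X^{p(p-1)}Y^{p(p-1)} defines an injective G̃-homomorphism from the 1-dimensional module (det^{p-1})^τ into U_{(p-1)²}/Ψ(V_{1,p-2}). Concretely: for any g = (a b; c e) ∈ GL₂(F_{p²}), g · X^{p(p-1)}Y^{p(p-1)} ≡ det(g)^{p(p-1)} · X^{p(p-1)}Y^{p(p-1)} modulo Ψ(Sym¹(k²) ⊗ (Sym^{p-2}(k²))^τ), where computations take place in k[X,Y]/(X^{p²}-X, Y^{p²}-Y). -/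
open Finset

private theorem stmt10_sign (p : ℕ) (hp : p.Prime) (F : Type*) [Field F] [CharP F p] :
    ∀ i, i ≤ p - 1 → ((p-1).choose i : F) = (-1)^i := by
  intro i
  induction i with
  | zero => simp
  | succ i ih =>
    intro hi
    have h1 : i ≤ p - 1 := by omega
    have hpascal : (p).choose (i+1) = (p-1).choose i + (p-1).choose (i+1) := by
      conv_lhs => rw [show p = (p-1) + 1 from by omega]
      rw [Nat.choose_succ_succ]
    have hdvd : (p : ℕ) ∣ p.choose (i+1) := hp.dvd_choose_self (by omega) (by omega)
    have hzero : ((p.choose (i+1) : ℕ) : F) = 0 := (CharP.cast_eq_zero_iff F p _).mpr hdvd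
    rw [hpascal] at hzero
    push_cast at hzero
    rw [ih h1] at hzero
    rw [pow_succ]
    linear_combination hzero

private theorem stmt10_coefsum (p : ℕ) [hfp : Fact p.Prime] (hp5 : 5 < p) (F : Type*) [Field F]
    [Fintype F] [CharP F p] (hcard : Fintype.card F = p^2) (a b c e : F) (hd : a*e - b*c ≠ 0) :
    ∑ ij ∈ ((Finset.range (p-1+1) ×ˢ Finset.range (p-1+1)).filter (fun ij => ij.1 + ij.2 = p-1)),
      ((p-1).choose ij.1 : F) * ((p-1).choose ij.2) * a^(p*ij.1) * c^(p*(p-1-ij.1)) * b^(p*ij.2)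
        * e^(p*(p-1-ij.2))
      = (a*e - b*c)^(p*(p-1)) := by
  have hp := hfp.out
  have hchar : ∀ t : F, t ^ (p^2) = t := fun t => by rw [← hcard]; exact FiniteField.pow_card t
  set n := p - 1 with hn
  have heven : Even n := Nat.Odd.sub_odd (hp.odd_of_ne_two (by omega)) odd_one
  have hre : ∑ ij ∈ ((Finset.range (n+1) ×ˢ Finset.range (n+1)).filter (fun ij => ij.1 + ij.2 = n)),
      ((n).choose ij.1 : F) * ((n).choose ij.2) * a^(p*ij.1) * c^(p*(n-ij.1)) * b^(p*ij.2)
        * e^(p*(n-ij.2))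
      = ∑ i ∈ Finset.range (n+1), ((a*e)^p)^i * ((b*c)^p)^(n-i) := by
    refine Finset.sum_nbij' (fun ij => ij.1) (fun i => (i, n - i)) ?_ ?_ ?_ ?_ ?_
    · intro ij hij
      simp only [Finset.mem_filter, Finset.mem_product, Finset.mem_range] at hij ⊢
      omega
    · intro i hi
      simp only [Finset.mem_filter, Finset.mem_product, Finset.mem_range] at hi ⊢
      omega
    · intro ij hij
      simp only [Finset.mem_filter, Finset.mem_product, Finset.mem_range] at hij
      ext
      · simp
      · simp; omega
    · intro i hi; simp
    · intro ij hij
      simp only [Finset.mem_filter, Finset.mem_product, Finset.mem_range] at hij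
      obtain ⟨⟨hi, hj⟩, hsum⟩ := hij
      have h2 : ij.2 = n - ij.1 := by omega
      have h3 : n - ij.2 = ij.1 := by omega
      rw [h3, stmt10_sign p hp F ij.1 (by omega), stmt10_sign p hp F ij.2 (by omega), h2]
      rw [show ((-1:F)^ij.1 * (-1)^(n-ij.1)) = 1 by
        rw [← pow_add, show ij.1 + (n - ij.1) = n by omega]; exact heven.neg_one_pow]
      simp only [one_mul, mul_pow, ← pow_mul]
      ring
  rw [hre]
  have hgeom := geom_sum₂_mul ((a*e)^p) ((b*c)^p) p
  rw [show Finset.range p = Finset.range (n+1) from by congr 1; omega] at hgeom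
  simp only [← hn] at hgeom
  have hst : (a*e)^p - (b*c)^p = (a*e - b*c)^p := (sub_pow_char ..).symm
  have hdp : (a*e-b*c)^p ≠ 0 := pow_ne_zero _ hd
  apply mul_right_cancel₀ hdp
  rw [← hst, hgeom]
  rw [← pow_mul, ← pow_mul, hst, ← pow_add]
  rw [show p * n + p = p^2 from by rw [show p = n+1 from by omega]; ring]
  rw [hchar, show p * p = p^2 from by ring, hchar, hchar]

/-- For any `g ∈ GL₂(F_{p²})`, acting on the monomial
`X^{p(p-1)} Y^{p(p-1)}` (realized as the function `v ↦ v₀^{p(p-1)} v₁^{p(p-1)}` on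
`F_{p²}²`) gives back `det(g)^{p(p-1)}` times the monomial, modulo the image
`Ψ(Sym¹(k²) ⊗ (Sym^{p-2}(k²))^τ)`; i.e. the class of `X^{p(p-1)}Y^{p(p-1)}` spans a copy of
the one-dimensional module `(det^{p-1})^τ` in `U_{(p-1)²}/Ψ(V_{1,p-2})`. -/
theorem stmt_10 (p : ℕ) [Fact p.Prime] (hp5 : 5 < p)
    (F k : Type*) [Field F] [Fintype F] [CharP F p] [Field k] [IsAlgClosed k] [CharP k p]
    (hcard : Fintype.card F = p ^ 2) (ι : F →+* k)
    (PsiIm : Submodule k ((Fin 2 → F) → k))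
    (hPsiIm : PsiIm = Submodule.span k {h : (Fin 2 → F) → k |
      ∃ f g : MvPolynomial (Fin 2) k,
        f ∈ MvPolynomial.homogeneousSubmodule (Fin 2) k 1 ∧
        g ∈ MvPolynomial.homogeneousSubmodule (Fin 2) k (p - 2) ∧
        h = fun v => MvPolynomial.eval (fun i => ι (v i)) f *
          MvPolynomial.eval (fun i => ι (v i) ^ p) g}) :
    ∀ g : Matrix.GeneralLinearGroup (Fin 2) F,
      ((fun v : Fin 2 → F =>
          ι (Matrix.vecMul v (g : Matrix (Fin 2) (Fin 2) F) 0) ^ (p * (p - 1)) *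
          ι (Matrix.vecMul v (g : Matrix (Fin 2) (Fin 2) F) 1) ^ (p * (p - 1))) -
        ι ((g : Matrix (Fin 2) (Fin 2) F).det) ^ (p * (p - 1)) •
          (fun v : Fin 2 → F => ι (v 0) ^ (p * (p - 1)) * ι (v 1) ^ (p * (p - 1))))
        ∈ PsiIm := by
  subst hPsiIm
  intro g
  have hp := (‹Fact p.Prime›).out
  have hchar : ∀ t : F, t ^ (p^2) = t := fun t => by rw [← hcard]; exact FiniteField.pow_card t
  set M : Matrix (Fin 2) (Fin 2) F := (g : Matrix (Fin 2) (Fin 2) F) with hM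
  have hdet0 : M.det ≠ 0 := (Matrix.isUnits_det_units g).ne_zero
  set a := M 0 0 with ha
  set b := M 0 1 with hb
  set c := M 1 0 with hc
  set e := M 1 1 with he
  have hdet : M.det = a * e - b * c := Matrix.det_fin_two M
  set n := p - 1 with hn
  have hv0 : ∀ v : Fin 2 → F, Matrix.vecMul v M 0 = v 0 * a + v 1 * c := by
    intro v; simp [Matrix.vecMul, dotProduct, Fin.sum_univ_two, ha, hc]
  have hv1 : ∀ v : Fin 2 → F, Matrix.vecMul v M 1 = v 0 * b + v 1 * e := by
    intro v; simp [Matrix.vecMul, dotProduct, Fin.sum_univ_two, hb, he]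
  -- reduction lemma in F
  have hred : ∀ (t : F) (m : ℕ), p ≤ m → t^(p*m) = t * (t^p)^(m-p) := by
    intro t m hm
    calc t^(p*m) = t^(p*(m-p) + p*p) := by
          rw [← Nat.mul_add, Nat.sub_add_cancel hm]
      _ = t^(p*(m-p)) * t^(p*p) := pow_add t _ _
      _ = (t^p)^(m-p) * t := by rw [pow_mul, show p*p = p^2 from by ring, hchar]
      _ = t * (t^p)^(m-p) := mul_comm _ _
  -- the coefficients
  set coef : ℕ × ℕ → F := fun ij =>
    (n.choose ij.1 : F) * (n.choose ij.2) * a^(p*ij.1) * c^(p*(n-ij.1)) * b^(p*ij.2)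
      * e^(p*(n-ij.2)) with hcoef
  -- the binomial expansion
  have expand : ∀ x y : F, (x*a + y*c)^(p*n) * (x*b + y*e)^(p*n)
      = ∑ ij ∈ Finset.range (n+1) ×ˢ Finset.range (n+1),
          coef ij * x^(p*(ij.1+ij.2)) * y^(p*(2*n - ij.1 - ij.2)) := by
    intro x y
    have h1 : (x*a + y*c)^(p*n)
        = ∑ i ∈ Finset.range (n+1), (x^p*a^p)^i * (y^p*c^p)^(n-i) * ((n).choose i : F) := by
      rw [pow_mul, add_pow_char, mul_pow, mul_pow, add_pow]
    have h2 : (x*b + y*e)^(p*n)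
        = ∑ j ∈ Finset.range (n+1), (x^p*b^p)^j * (y^p*e^p)^(n-j) * ((n).choose j : F) := by
      rw [pow_mul, add_pow_char, mul_pow, mul_pow, add_pow]
    rw [h1, h2, Finset.sum_mul_sum, ← Finset.sum_product']
    refine Finset.sum_congr rfl ?_
    intro ij hij
    simp only [Finset.mem_product, Finset.mem_range] at hij
    obtain ⟨hi, hj⟩ := hij
    rw [hcoef]
    simp only [mul_pow, ← pow_mul]
    rw [show 2*n - ij.1 - ij.2 = (n-ij.1)+(n-ij.2) from by omega]
    simp only [Nat.mul_add, pow_add]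
    ring
  -- the key identity
  set B := (Finset.range (n+1) ×ˢ Finset.range (n+1)).filter (fun ij => ¬ ij.1 + ij.2 = n)
    with hB
  have hcs := stmt10_coefsum p hp5 F hcard a b c e (by rw [← hdet]; exact hdet0)
  simp only [← hn] at hcs
  have key : ((fun v : Fin 2 → F =>
          ι (Matrix.vecMul v M 0) ^ (p * n) * ι (Matrix.vecMul v M 1) ^ (p * n)) -
        ι (M.det) ^ (p * n) •
          (fun v : Fin 2 → F => ι (v 0) ^ (p * n) * ι (v 1) ^ (p * n)))
      = ∑ ij ∈ B, (fun v : Fin 2 → F =>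
          ι (coef ij * (v 0)^(p*(ij.1+ij.2)) * (v 1)^(p*(2*n - ij.1 - ij.2)))) := by
    funext v
    simp only [Pi.sub_apply, Pi.smul_apply, Finset.sum_apply, smul_eq_mul]
    rw [← map_sum]
    have hFid : (Matrix.vecMul v M 0)^(p*n) * (Matrix.vecMul v M 1)^(p*n)
        - M.det^(p*n) * ((v 0)^(p*n) * (v 1)^(p*n))
        = ∑ ij ∈ B, coef ij * (v 0)^(p*(ij.1+ij.2)) * (v 1)^(p*(2*n - ij.1 - ij.2)) := by
      rw [hv0 v, hv1 v, expand (v 0) (v 1)]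
      rw [← Finset.sum_filter_add_sum_filter_not (Finset.range (n+1) ×ˢ Finset.range (n+1))
        (fun ij => ij.1 + ij.2 = n)]
      have hA : ∑ ij ∈ (Finset.range (n+1) ×ˢ Finset.range (n+1)).filter
          (fun ij => ij.1 + ij.2 = n),
          coef ij * (v 0)^(p*(ij.1+ij.2)) * (v 1)^(p*(2*n - ij.1 - ij.2))
          = M.det ^ (p*n) * ((v 0)^(p*n) * (v 1)^(p*n)) := by
        rw [show M.det ^ (p*n) = ∑ ij ∈ (Finset.range (n+1) ×ˢ Finset.range (n+1)).filter
            (fun ij => ij.1 + ij.2 = n), coef ij from by rw [hdet, ← hcs, hcoef], Finset.sum_mul]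
        refine Finset.sum_congr rfl ?_
        intro ij hij
        simp only [Finset.mem_filter, Finset.mem_product, Finset.mem_range] at hij
        rw [hij.2, show 2*n - ij.1 - ij.2 = n from by omega]
        ring
      rw [hA]
      ring
    rw [← hFid]
    simp only [map_sub, map_mul, map_pow]
  rw [key]
  -- each remaining term is in the span
  refine Submodule.sum_mem _ ?_
  intro ij hij
  rw [hB] at hij
  simp only [Finset.mem_filter, Finset.mem_product, Finset.mem_range] at hij
  obtain ⟨⟨hi, hj⟩, hne⟩ := hij
  rcases Nat.lt_or_ge (ij.1 + ij.2) n with hlt | hge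
  · -- low case: factor out v 1
    have hmem : (fun v : Fin 2 → F => MvPolynomial.eval (fun i => ι (v i))
          (MvPolynomial.X 1 : MvPolynomial (Fin 2) k) *
        MvPolynomial.eval (fun i => ι (v i) ^ p)
          ((MvPolynomial.X 0)^(ij.1+ij.2) * (MvPolynomial.X 1)^(p-2-(ij.1+ij.2))))
        ∈ Submodule.span k {h : (Fin 2 → F) → k |
          ∃ f g : MvPolynomial (Fin 2) k,
            f ∈ MvPolynomial.homogeneousSubmodule (Fin 2) k 1 ∧
            g ∈ MvPolynomial.homogeneousSubmodule (Fin 2) k (p - 2) ∧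
            h = fun v => MvPolynomial.eval (fun i => ι (v i)) f *
              MvPolynomial.eval (fun i => ι (v i) ^ p) g} := by
      apply Submodule.subset_span
      refine ⟨MvPolynomial.X 1, (MvPolynomial.X 0)^(ij.1+ij.2)
        * (MvPolynomial.X 1)^(p-2-(ij.1+ij.2)), ?_, ?_, rfl⟩
      · exact (MvPolynomial.mem_homogeneousSubmodule _ _).mpr (MvPolynomial.isHomogeneous_X k 1)
      · refine (MvPolynomial.mem_homogeneousSubmodule _ _).mpr ?_
        have h := ((MvPolynomial.isHomogeneous_X k (0 : Fin 2)).pow (ij.1+ij.2)).mul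
          ((MvPolynomial.isHomogeneous_X k (1 : Fin 2)).pow (p-2-(ij.1+ij.2)))
        rw [show 1*(ij.1+ij.2) + 1*(p-2-(ij.1+ij.2)) = p - 2 from by omega] at h
        exact h
    have heq : (fun v : Fin 2 → F =>
        ι (coef ij * (v 0)^(p*(ij.1+ij.2)) * (v 1)^(p*(2*n - ij.1 - ij.2))))
        = ι (coef ij) • (fun v : Fin 2 → F => MvPolynomial.eval (fun i => ι (v i))
              (MvPolynomial.X 1 : MvPolynomial (Fin 2) k) *
            MvPolynomial.eval (fun i => ι (v i) ^ p)
              ((MvPolynomial.X 0)^(ij.1+ij.2) * (MvPolynomial.X 1)^(p-2-(ij.1+ij.2)))) := by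
      funext v
      rw [hred (v 1) (2*n - ij.1 - ij.2) (by omega),
        show 2*n - ij.1 - ij.2 - p = p - 2 - (ij.1+ij.2) from by omega]
      simp only [Pi.smul_apply, smul_eq_mul, MvPolynomial.eval_X, map_mul, MvPolynomial.eval_mul,
        MvPolynomial.eval_pow, map_pow, ← pow_mul]
      ring
    rw [heq]
    exact Submodule.smul_mem _ _ hmem
  · -- high case: factor out v 0
    have hgep : p ≤ ij.1 + ij.2 := by omega
    have hmem : (fun v : Fin 2 → F => MvPolynomial.eval (fun i => ι (v i))
          (MvPolynomial.X 0 : MvPolynomial (Fin 2) k) *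
        MvPolynomial.eval (fun i => ι (v i) ^ p)
          ((MvPolynomial.X 0)^(ij.1+ij.2-p) * (MvPolynomial.X 1)^(2*n - ij.1 - ij.2)))
        ∈ Submodule.span k {h : (Fin 2 → F) → k |
          ∃ f g : MvPolynomial (Fin 2) k,
            f ∈ MvPolynomial.homogeneousSubmodule (Fin 2) k 1 ∧
            g ∈ MvPolynomial.homogeneousSubmodule (Fin 2) k (p - 2) ∧
            h = fun v => MvPolynomial.eval (fun i => ι (v i)) f *
              MvPolynomial.eval (fun i => ι (v i) ^ p) g} := by
      apply Submodule.subset_span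
      refine ⟨MvPolynomial.X 0, (MvPolynomial.X 0)^(ij.1+ij.2-p)
        * (MvPolynomial.X 1)^(2*n - ij.1 - ij.2), ?_, ?_, rfl⟩
      · exact (MvPolynomial.mem_homogeneousSubmodule _ _).mpr (MvPolynomial.isHomogeneous_X k 0)
      · refine (MvPolynomial.mem_homogeneousSubmodule _ _).mpr ?_
        have h := ((MvPolynomial.isHomogeneous_X k (0 : Fin 2)).pow (ij.1+ij.2-p)).mul
          ((MvPolynomial.isHomogeneous_X k (1 : Fin 2)).pow (2*n - ij.1 - ij.2))
        rw [show 1*(ij.1+ij.2-p) + 1*(2*n - ij.1 - ij.2) = p - 2 from by omega] at h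
        exact h
    have heq : (fun v : Fin 2 → F =>
        ι (coef ij * (v 0)^(p*(ij.1+ij.2)) * (v 1)^(p*(2*n - ij.1 - ij.2))))
        = ι (coef ij) • (fun v : Fin 2 → F => MvPolynomial.eval (fun i => ι (v i))
              (MvPolynomial.X 0 : MvPolynomial (Fin 2) k) *
            MvPolynomial.eval (fun i => ι (v i) ^ p)
              ((MvPolynomial.X 0)^(ij.1+ij.2-p) * (MvPolynomial.X 1)^(2*n - ij.1 - ij.2))) := by
      funext v
      rw [hred (v 0) (ij.1 + ij.2) hgep]
      simp only [Pi.smul_apply, smul_eq_mul, MvPolynomial.eval_X, map_mul, MvPolynomial.eval_mul,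
        MvPolynomial.eval_pow, map_pow, ← pow_mul]
      ring
    rw [heq]
    exact Submodule.smul_mem _ _ hmem
end
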